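/- (Asymptotic goodness of non-binary LDPC codes.) Fix a rational R_f ∈ (0,1), D with D > 1/(1−R_f), λ > 1/(D(1−R_f)−1), and δ < D(1−R_f)/(D+1). Let p : ℕ → ℕ be a sequence of primes with p(n)/n^λ → 1, and restrict to n with n(1−R_f) ∈ ℕ. For each such n, let H(n) ∈ {0,1}^{n(1−R_f) × n} be a binary skeleton matrix whose Tanner graph satisfies: for every set S of columns with |S| ≤ n/(D+1), |N(S)| ≥ D(1−R_f)|S|. Let ℍ(n) be the associated random matrix over 𝔽_{p(n)} (independent uniform entries at positions where H(n) has a 1, zero elsewhere), and let C_f = ker ℍ(n) ⊆ 𝔽_{p(n)}^n be the corresponding LDPC code. Then the probability that C_f contains a nonzero codeword of Hamming weight at most δn tends to 0 as n → ∞; i.e., with probability tending to 1 the minimum Hamming distance of C_f exceeds δn. -/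

import Mathlib

open Finset

open Classical in
lemma count_bad_le (mm nn pp : ℕ) (hp : pp.Prime) (H : Matrix (Fin mm) (Fin nn) Bool)
    (x : Fin nn → ZMod pp) :
    {M : Matrix (Fin mm) (Fin nn) (ZMod pp) |
        (∀ i j, H i j = false → M i j = 0) ∧ M.mulVec x = 0}.ncard
      * pp ^ (univ.filter (fun i : Fin mm => ∃ j, H i j = true ∧ x j ≠ 0)).card
      ≤ pp ^ (univ.filter (fun q : Fin mm × Fin nn => H q.1 q.2 = true)).card := by
  classical
  haveI : Fact pp.Prime := ⟨hp⟩
  set E : Finset (Fin mm × Fin nn) := univ.filter (fun q => H q.1 q.2 = true) with hE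
  set N : Finset (Fin mm) := univ.filter (fun i => ∃ j, H i j = true ∧ x j ≠ 0) with hN
  have hsel : ∀ i ∈ N, ∃ j, H i j = true ∧ x j ≠ 0 := by
    intro i hi; simpa [hN] using hi
  choose sel hsel1 hsel2 using hsel
  set R : Finset (Fin mm × Fin nn) := N.attach.image (fun i => (i.1, sel i.1 i.2)) with hR
  have hRmem : ∀ q, q ∈ R ↔ ∃ (hi : q.1 ∈ N), sel q.1 hi = q.2 := by
    intro q
    simp only [hR, mem_image, mem_attach, true_and]
    constructor
    · rintro ⟨⟨i, hi⟩, heq⟩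
      obtain ⟨h1, h2⟩ : i = q.1 ∧ sel i hi = q.2 :=
        ⟨congrArg Prod.fst heq, congrArg Prod.snd heq⟩
      subst h1; exact ⟨hi, h2⟩
    · rintro ⟨hi, hsel'⟩
      exact ⟨⟨q.1, hi⟩, by simp [hsel']⟩
  have hRE : R ⊆ E := by
    intro q hq
    obtain ⟨hi, hsel'⟩ := (hRmem q).mp hq
    have := hsel1 q.1 hi
    rw [hsel'] at this
    simp [hE, this]
  have hRcard : R.card = N.card := by
    rw [hR, card_image_of_injOn, card_attach]
    intro a _ b _ hab
    exact Subtype.ext ((Prod.mk.injEq _ _ _ _).mp hab |>.1)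
  set E' : Finset (Fin mm × Fin nn) := E \ R with hE'
  have hcards : E'.card + N.card = E.card := by
    rw [hE', card_sdiff_of_subset hRE, hRcard]
    have := card_le_card hRE
    omega
  -- injection of the bad set into functions on E'
  set S : Set (Matrix (Fin mm) (Fin nn) (ZMod pp)) :=
    {M | (∀ i j, H i j = false → M i j = 0) ∧ M.mulVec x = 0} with hS
  have hcard : S.ncard ≤ pp ^ E'.card := by
    let f : S → (↥E' → ZMod pp) := fun M e => M.1 e.1.1 e.1.2
    have hinj : Function.Injective f := by
      rintro ⟨M, hM1, hM2⟩ ⟨M', hM1', hM2'⟩ hMM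
      have hagree : ∀ q ∈ E', M q.1 q.2 = M' q.1 q.2 := by
        intro q hq
        exact congrFun hMM ⟨q, hq⟩
      have key : ∀ i j, M i j = M' i j := by
        intro i j
        by_cases hij : H i j = true
        · by_cases hR' : (i, j) ∈ R
          · -- removed edge: j = sel i, i ∈ N
            obtain ⟨hi', hsel'⟩ := (hRmem (i, j)).mp hR'
            have hiN : i ∈ N := hi'
            have hjs : sel i hiN = j := hsel'
            clear hsel' hi' hR'
            subst hjs
            have h1 : ∑ k, M i k * x k = 0 := congrFun hM2 i
            have h2 : ∑ k, M' i k * x k = 0 := congrFun hM2' i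
            have hsplit1 : ∑ k, M i k * x k
                = M i (sel i hiN) * x (sel i hiN) + ∑ k ∈ univ \ {sel i hiN}, M i k * x k :=
              Finset.sum_eq_add_sum_sdiff_singleton_of_mem (mem_univ _) _
            have hsplit2 : ∑ k, M' i k * x k
                = M' i (sel i hiN) * x (sel i hiN) + ∑ k ∈ univ \ {sel i hiN}, M' i k * x k :=
              Finset.sum_eq_add_sum_sdiff_singleton_of_mem (mem_univ _) _
            have hrest : ∑ k ∈ univ \ {sel i hiN}, M i k * x k
                = ∑ k ∈ univ \ {sel i hiN}, M' i k * x k := by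
              apply Finset.sum_congr rfl
              intro k hk
              have hk' : k ≠ sel i hiN := by simpa using (mem_sdiff.mp hk).2
              by_cases hik : H i k = true
              · have hmem : (i, k) ∈ E' := by
                  rw [hE', mem_sdiff]
                  constructor
                  · simp [hE, hik]
                  · rw [hRmem]
                    rintro ⟨hi'', hsel''⟩
                    exact hk' hsel''.symm
                rw [hagree (i, k) hmem]
              · rw [hM1 i k (by simpa using hik), hM1' i k (by simpa using hik)]
            have : M i (sel i hiN) * x (sel i hiN) = M' i (sel i hiN) * x (sel i hiN) := by
              have := hsplit1 ▸ h1
              have := hsplit2 ▸ h2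
              -- a + c = 0, b + c = 0 => a = b
              have e1 : M i (sel i hiN) * x (sel i hiN) + ∑ k ∈ univ \ {sel i hiN}, M i k * x k = 0 := by
                rw [← hsplit1]; exact h1
              have e2 : M' i (sel i hiN) * x (sel i hiN) + ∑ k ∈ univ \ {sel i hiN}, M' i k * x k = 0 := by
                rw [← hsplit2]; exact h2
              rw [hrest] at e1
              linear_combination e1 - e2
            exact mul_right_cancel₀ (hsel2 i hiN) this
          · have hmem : (i, j) ∈ E' := by
              rw [hE', mem_sdiff]; exact ⟨by simp [hE, hij], hR'⟩
            exact hagree (i, j) hmem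
        · rw [hM1 i j (by simpa using hij), hM1' i j (by simpa using hij)]
      exact Subtype.ext (by ext i j; exact key i j)
    calc S.ncard = Nat.card S := (Nat.card_coe_set_eq S).symm
      _ ≤ Nat.card (↥E' → ZMod pp) := Nat.card_le_card_of_injective f hinj
      _ = pp ^ E'.card := by
          rw [Nat.card_eq_fintype_card, Fintype.card_fun, ZMod.card, Fintype.card_coe]
  calc S.ncard * pp ^ N.card ≤ pp ^ E'.card * pp ^ N.card :=
        Nat.mul_le_mul_right _ hcard
    _ = pp ^ E.card := by rw [← pow_add, hcards]

lemma fiber_card_le (nn pp : ℕ) (hp : pp.Prime) (X : Finset (Fin nn → ZMod pp))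
    (S : Finset (Fin nn))
    (hX : ∀ x ∈ X, (Finset.univ.filter (fun j => x j ≠ 0)) = S) :
    X.card ≤ pp ^ S.card := by
  classical
  haveI : NeZero pp := ⟨hp.pos.ne'⟩
  have := Finset.card_le_card_of_injOn (fun (x : Fin nn → ZMod pp) (j : ↥S) => x j.1)
    (fun x _ => Finset.mem_univ (α := (↥S → ZMod pp)) _) (s := X) ?_
  · calc X.card ≤ (Finset.univ : Finset (↥S → ZMod pp)).card := this
      _ = pp ^ S.card := by
        rw [Finset.card_univ, Fintype.card_fun, ZMod.card, Fintype.card_coe]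
  · intro x hx y hy hxy
    rw [Finset.mem_coe] at hx hy
    funext j
    by_cases hj : j ∈ S
    · exact congrFun hxy ⟨j, hj⟩
    · have hx0 : x j = 0 := by
        by_contra h
        exact hj (hX x hx ▸ Finset.mem_filter.mpr ⟨Finset.mem_univ _, h⟩)
      have hy0 : y j = 0 := by
        by_contra h
        exact hj (hX y hy ▸ Finset.mem_filter.mpr ⟨Finset.mem_univ _, h⟩)
      rw [hx0, hy0]

lemma geom_icc_le (n : ℕ) (r : ℝ) (hr0 : 0 ≤ r) (hr : r ≤ 1/2) :
    ∑ s ∈ Finset.Icc 1 n, r ^ s ≤ 2 * r := by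
  have step : ∀ s ∈ Finset.Icc 1 n, r ^ s ≤ r * (1/2) ^ (s - 1) := by
    intro s hs
    obtain ⟨h1, _⟩ := Finset.mem_Icc.mp hs
    calc r ^ s = r * r ^ (s - 1) := by
          rw [← pow_succ']; congr 1; omega
      _ ≤ r * (1/2) ^ (s-1) := by
          apply mul_le_mul_of_nonneg_left _ hr0
          exact pow_le_pow_left₀ hr0 hr _
  calc ∑ s ∈ Finset.Icc 1 n, r ^ s ≤ ∑ s ∈ Finset.Icc 1 n, r * (1/2) ^ (s-1) :=
        Finset.sum_le_sum step
    _ = r * ∑ s ∈ Finset.Icc 1 n, (1/2:ℝ) ^ (s-1) := by rw [Finset.mul_sum]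
    _ ≤ r * 2 := by
        apply mul_le_mul_of_nonneg_left _ hr0
        have heq : ∑ s ∈ Finset.Icc 1 n, (1/2:ℝ) ^ (s-1) = ∑ i ∈ Finset.range n, (1/2:ℝ) ^ i := by
          apply Finset.sum_nbij' (i := fun s => s - 1) (j := fun i => i + 1) <;>
            intros <;> simp_all [Finset.mem_Icc, Finset.mem_range] <;> omega
        rw [heq]
        exact sum_geometric_two_le n
    _ = 2 * r := mul_comm _ _

open Filter

set_option maxHeartbeats 1000000 in
/-- **Asymptotic goodness of non-binary LDPC codes.**  Fix a rational `R_f ∈ (0,1)`,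
`D > 1/(1−R_f)`, `λ > 1/(D(1−R_f)−1)` and `δ < D(1−R_f)/(D+1)`.  Let `p(n)` be primes with
`p(n)/n^λ → 1`, restrict to `n` with `n(1−R_f) ∈ ℕ` (i.e. `m n = n(1−R_f)`), and for each
such `n` let `H(n)` be a binary skeleton matrix whose Tanner graph satisfies
`|N(S)| ≥ D(1−R_f)|S|` for every set `S` of columns with `|S| ≤ n/(D+1)`.  Let `ℍ(n)` be the
associated random matrix over `𝔽_{p(n)}` (independent uniform entries where `H(n)` has a 1,
zero elsewhere — so the sample space is the set of compatible matrices, of cardinality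
`p^{#ones}`), and let `C_f = ker ℍ(n)`.  Then the probability that `C_f` contains a nonzero
codeword of Hamming weight at most `δn` tends to `0`. -/
theorem ldpc_min_distance
    (Rf : ℚ) (hRf : 0 < Rf ∧ Rf < 1) (D lam δ : ℝ)
    (hD : 1 / (1 - (Rf : ℝ)) < D) (hlam : 1 / (D * (1 - (Rf : ℝ)) - 1) < lam)
    (hδ : δ < D * (1 - (Rf : ℝ)) / (D + 1))
    (p : ℕ → ℕ) (hp : ∀ n, (p n).Prime)
    (hpn : Tendsto (fun n : ℕ => (p n : ℝ) / (n : ℝ) ^ lam) atTop (nhds 1))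
    (m : ℕ → ℕ)
    (H : (n : ℕ) → Matrix (Fin (m n)) (Fin n) Bool)
    (hexp : ∀ n : ℕ, (m n : ℚ) = (n : ℚ) * (1 - Rf) →
      ∀ S : Set (Fin n), (S.ncard : ℝ) ≤ (n : ℝ) / (D + 1) →
        D * (1 - (Rf : ℝ)) * (S.ncard : ℝ) ≤
          (Set.ncard {i : Fin (m n) | ∃ j ∈ S, H n i j = true} : ℝ)) :
    Tendsto
      (fun n : ℕ =>
        (Set.ncard {M : Matrix (Fin (m n)) (Fin n) (ZMod (p n)) |
            (∀ i j, H n i j = false → M i j = 0) ∧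
            ∃ x : Fin n → ZMod (p n), x ≠ 0 ∧ M.mulVec x = 0 ∧
              (Set.ncard {j | x j ≠ 0} : ℝ) ≤ δ * n} : ℝ)
          / (p n : ℝ) ^ (Set.ncard {q : Fin (m n) × Fin n | H n q.1 q.2 = true}))
      (atTop ⊓ Filter.principal {n : ℕ | (m n : ℚ) = (n : ℚ) * (1 - Rf)}) (nhds 0) := by
  classical
  obtain ⟨hRf0, hRf1⟩ := hRf
  have hRr : (0:ℝ) < 1 - (Rf:ℝ) := by
    have : (Rf:ℝ) < 1 := by exact_mod_cast hRf1
    linarith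
  have hD0 : 0 < D := lt_trans (by positivity) hD
  set β : ℝ := D * (1 - (Rf:ℝ)) - 1 with hβdef
  have hβ0 : 0 < β := by
    have h := (div_lt_iff₀ hRr).mp hD
    simp only [hβdef]; nlinarith
  have hlam0 : 0 < lam := lt_trans (by positivity) hlam
  have hlb : 1 < lam * β := by
    have h := (div_lt_iff₀ hβ0).mp hlam
    nlinarith
  set c : ℝ := D * (1 - (Rf:ℝ)) with hcdef
  have hc0 : 0 < c := by simp only [hcdef]; positivity
  have hc1β : c = 1 + β := by rw [hβdef]; ring
  set γ : ℝ := c / (D + 1) - δ with hγdef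
  have hγ0 : 0 < γ := by simp only [hγdef, hcdef]; linarith
  -- p n → ∞
  have hnlam : Tendsto (fun n : ℕ => ((n:ℝ)) ^ lam) atTop atTop :=
    (tendsto_rpow_atTop hlam0).comp tendsto_natCast_atTop_atTop
  have hptop : Tendsto (fun n : ℕ => (p n : ℝ)) atTop atTop := by
    refine (hpn.pos_mul_atTop one_pos hnlam).congr' ?_
    filter_upwards [eventually_gt_atTop 0] with n hn
    have hpow : ((n:ℝ)) ^ lam ≠ 0 :=
      (Real.rpow_pos_of_pos (by exact_mod_cast hn) _).ne'
    field_simp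
  have hphalf : ∀ᶠ n : ℕ in atTop, ((n:ℝ)) ^ lam / 2 ≤ (p n : ℝ) := by
    have h2 : ∀ᶠ n in atTop, (1/2 : ℝ) < (p n : ℝ) / ((n:ℝ)) ^ lam :=
      hpn.eventually (lt_mem_nhds (by norm_num))
    filter_upwards [h2, eventually_gt_atTop 0] with n h hn
    have hpow : (0:ℝ) < ((n:ℝ)) ^ lam := Real.rpow_pos_of_pos (by exact_mod_cast hn) _
    rw [lt_div_iff₀ hpow] at h
    nlinarith
  -- the first part of the dominating function tends to 0
  have hA : Tendsto (fun n : ℕ => (n:ℝ) * (p n : ℝ) ^ (-β)) atTop (nhds 0) := by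
    apply squeeze_zero' (g := fun n : ℕ => 2 ^ β * ((n:ℝ)) ^ (1 - lam * β))
    · filter_upwards with n
      positivity
    · filter_upwards [hphalf, eventually_ge_atTop 1] with n hhalf hn1
      have hn0 : (0:ℝ) < (n:ℝ) := by exact_mod_cast hn1
      have hp0 : (0:ℝ) < (p n : ℝ) := by exact_mod_cast (hp n).pos
      have hb0 : (0:ℝ) < ((n:ℝ)) ^ lam / 2 := by positivity
      have key : (p n : ℝ) ^ (-β) ≤ 2 ^ β * ((n:ℝ)) ^ (-(lam * β)) := by
        have h1 : (((n:ℝ)) ^ lam / 2) ^ β ≤ (p n : ℝ) ^ β :=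
          Real.rpow_le_rpow hb0.le hhalf hβ0.le
        have h2 : (p n : ℝ) ^ (-β) ≤ ((((n:ℝ)) ^ lam / 2) ^ β)⁻¹ := by
          rw [Real.rpow_neg hp0.le]
          exact inv_anti₀ (Real.rpow_pos_of_pos hb0 _) h1
        have h3 : ((((n:ℝ)) ^ lam / 2) ^ β)⁻¹ = 2 ^ β * ((n:ℝ)) ^ (-(lam * β)) := by
          rw [Real.div_rpow (Real.rpow_nonneg hn0.le _) (by norm_num : (0:ℝ) ≤ 2),
            inv_div, ← Real.rpow_mul hn0.le, div_eq_mul_inv, ← Real.rpow_neg hn0.le]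
        rw [h3] at h2
        exact h2
      calc (n:ℝ) * (p n : ℝ) ^ (-β) ≤ (n:ℝ) * (2 ^ β * ((n:ℝ)) ^ (-(lam * β))) :=
            mul_le_mul_of_nonneg_left key hn0.le
        _ = 2 ^ β * (((n:ℝ)) ^ (1:ℝ) * ((n:ℝ)) ^ (-(lam * β))) := by
            rw [Real.rpow_one]; ring
        _ = 2 ^ β * ((n:ℝ)) ^ (1 - lam * β) := by
            rw [← Real.rpow_add hn0]; ring_nf
    · have h0 : Tendsto (fun x : ℝ => x ^ (-(lam * β - 1))) atTop (nhds 0) :=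
        tendsto_rpow_neg_atTop (by linarith)
      have h1 : Tendsto (fun n : ℕ => ((n:ℝ)) ^ (1 - lam * β)) atTop (nhds 0) := by
        have heq : (fun n : ℕ => ((n:ℝ)) ^ (1 - lam * β))
            = (fun x : ℝ => x ^ (-(lam * β - 1))) ∘ (Nat.cast : ℕ → ℝ) := by
          funext n; simp only [Function.comp_apply]; congr 1; ring
        rw [heq]
        exact h0.comp (tendsto_natCast_atTop_atTop (R := ℝ))
      simpa using h1.const_mul ((2:ℝ) ^ β)
  -- dominating function
  set g : ℕ → ℝ := fun n => 2 * ((n:ℝ) * (p n : ℝ) ^ (-β)) + (p n : ℝ)⁻¹ with hgdef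
  have hg0 : Tendsto g atTop (nhds 0) := by
    have h1 : Tendsto (fun n : ℕ => 2 * ((n:ℝ) * (p n : ℝ) ^ (-β))) atTop (nhds 0) := by
      have := hA.const_mul (2:ℝ)
      simpa using this
    have h2 : Tendsto (fun n : ℕ => (p n : ℝ)⁻¹) atTop (nhds 0) :=
      hptop.inv_tendsto_atTop
    simpa using h1.add h2
  apply squeeze_zero' (g := g)
  · apply Filter.Eventually.of_forall
    intro n
    positivity
  · -- the main eventual bound
    rw [Filter.eventually_inf_principal]
    -- eventual numeric facts
    have e1 : ∀ᶠ n : ℕ in atTop, (n:ℝ) * (p n : ℝ) ^ (-β) ≤ 1/2 :=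
      hA.eventually (gt_mem_nhds (by norm_num)) |>.mono (fun n h => le_of_lt h)
    have e2 : ∀ᶠ n : ℕ in atTop, 2 * (p n : ℝ) ^ (-γ) ≤ (p n : ℝ) ^ (-(γ/2)) := by
      filter_upwards [hptop.eventually_ge_atTop ((2:ℝ) ^ (2/γ))] with n hK
      have hp0 : (0:ℝ) < (p n : ℝ) := by exact_mod_cast (hp n).pos
      have h2 : (2:ℝ) ≤ (p n : ℝ) ^ (γ/2) := by
        have hmul : (2/γ) * (γ/2) = 1 := by field_simp
        calc (2:ℝ) = ((2:ℝ) ^ ((2/γ) * (γ/2))) := by rw [hmul, Real.rpow_one]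
          _ = ((2:ℝ) ^ (2/γ)) ^ (γ/2) := Real.rpow_mul (by norm_num) _ _
          _ ≤ (p n : ℝ) ^ (γ/2) := Real.rpow_le_rpow (by positivity) hK (by positivity)
      calc 2 * (p n : ℝ) ^ (-γ) ≤ (p n : ℝ) ^ (γ/2) * (p n : ℝ) ^ (-γ) :=
            mul_le_mul_of_nonneg_right h2 (Real.rpow_nonneg hp0.le _)
        _ = (p n : ℝ) ^ (-(γ/2)) := by rw [← Real.rpow_add hp0]; congr 1; ring
    have e3 : ∀ᶠ n : ℕ in atTop, c - γ/2 * (n:ℝ) ≤ -1 := by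
      have h := (tendsto_natCast_atTop_atTop (R := ℝ)).const_mul_atTop (half_pos hγ0)
      filter_upwards [h.eventually_ge_atTop (c + 1)] with n hn
      linarith
    filter_upwards [e1, e2, e3, eventually_ge_atTop 1] with n he1 he2 he3 hn1 hmem
    have hm : (m n : ℚ) = (n : ℚ) * (1 - Rf) := hmem
    simp only [hgdef]
    set P : ℝ := (p n : ℝ) with hPdef
    have hP0 : (0:ℝ) < P := by rw [hPdef]; exact_mod_cast (hp n).pos
    have hP1 : (1:ℝ) < P := by rw [hPdef]; exact_mod_cast (hp n).one_lt
    haveI : NeZero (p n) := ⟨(hp n).pos.ne'⟩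
    set E : Finset (Fin (m n) × Fin n) :=
      Finset.univ.filter (fun q => H n q.1 q.2 = true) with hEdef
    set NF : Finset (Fin n) → Finset (Fin (m n)) :=
      fun S => Finset.univ.filter (fun i => ∃ j ∈ S, H n i j = true) with hNFdef
    set Nx : (Fin n → ZMod (p n)) → Finset (Fin (m n)) :=
      fun x => Finset.univ.filter (fun i => ∃ j, H n i j = true ∧ x j ≠ 0) with hNxdef
    set w : (Fin n → ZMod (p n)) → Finset (Fin n) :=
      fun x => Finset.univ.filter (fun j => x j ≠ 0) with hwdef
    set X : Finset (Fin n → ZMod (p n)) :=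
      Finset.univ.filter
        (fun x => x ≠ 0 ∧ ((Set.ncard {j | x j ≠ 0} : ℝ) ≤ δ * n)) with hXdef
    set 𝒮 : Finset (Finset (Fin n)) :=
      Finset.univ.powerset.filter
        (fun S => S.Nonempty ∧ ((S.card : ℝ) ≤ δ * n)) with hSSdef
    have hEcard : {q : Fin (m n) × Fin n | H n q.1 q.2 = true}.ncard = E.card := by
      rw [show {q : Fin (m n) × Fin n | H n q.1 q.2 = true} = (E : Set _) by
        ext q; simp [hEdef]]
      exact Set.ncard_coe_finset _
    rw [hEcard]
    set Bad := {M : Matrix (Fin (m n)) (Fin n) (ZMod (p n)) |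
        (∀ i j, H n i j = false → M i j = 0) ∧
        ∃ x, x ≠ 0 ∧ M.mulVec x = 0 ∧
          ((Set.ncard {j | x j ≠ 0} : ℝ) ≤ δ * n)} with hBaddef
    set badx := fun x : Fin n → ZMod (p n) =>
      {M : Matrix (Fin (m n)) (Fin n) (ZMod (p n)) |
        (∀ i j, H n i j = false → M i j = 0) ∧ M.mulVec x = 0} with hbadxdef
    have step1 : Bad.ncard ≤ ∑ x ∈ X, (badx x).ncard := by
      have hfin : ∀ x, (badx x).Finite := fun _ => Set.toFinite _
      have hBfin : Bad.Finite := Set.toFinite _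
      rw [Set.ncard_eq_toFinset_card _ hBfin]
      have hsub : hBfin.toFinset ⊆ X.biUnion (fun x => (hfin x).toFinset) := by
        intro M hM
        rw [Set.Finite.mem_toFinset, hBaddef] at hM
        obtain ⟨hc', x, hx0, hxk, hxw⟩ := hM
        rw [Finset.mem_biUnion]
        exact ⟨x, by simp [hXdef, hx0, hxw], by
          rw [Set.Finite.mem_toFinset, hbadxdef]; exact ⟨hc', hxk⟩⟩
      calc _ ≤ (X.biUnion fun x => (hfin x).toFinset).card := Finset.card_le_card hsub
        _ ≤ ∑ x ∈ X, ((hfin x).toFinset).card := Finset.card_biUnion_le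
        _ = ∑ x ∈ X, (badx x).ncard := by
            refine Finset.sum_congr rfl fun x _ => ?_
            exact (Set.ncard_eq_toFinset_card _ (hfin x)).symm
    have step2 : ∀ x, ((badx x).ncard : ℝ) / P ^ E.card ≤ (P ^ (Nx x).card)⁻¹ := by
      intro x
      have h := count_bad_le (m n) n (p n) (hp n) (H n) x
      have hcast : ((badx x).ncard : ℝ) * P ^ (Nx x).card ≤ P ^ E.card := by
        rw [hbadxdef, hPdef]
        exact_mod_cast h
      rw [div_le_iff₀ (by positivity)]
      calc ((badx x).ncard : ℝ) ≤ P ^ E.card / P ^ (Nx x).card :=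
            (le_div_iff₀ (by positivity)).mpr hcast
        _ = (P ^ (Nx x).card)⁻¹ * P ^ E.card := div_eq_inv_mul _ _
    have chain1 : ((Bad.ncard : ℝ)) / P ^ E.card ≤ ∑ x ∈ X, (P ^ (Nx x).card)⁻¹ := by
      calc ((Bad.ncard : ℝ)) / P ^ E.card
          ≤ (∑ x ∈ X, ((badx x).ncard : ℝ)) / P ^ E.card := by
            apply div_le_div_of_nonneg_right ?_ (by positivity)
            exact_mod_cast step1
        _ = ∑ x ∈ X, ((badx x).ncard : ℝ) / P ^ E.card := Finset.sum_div _ _ _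
        _ ≤ ∑ x ∈ X, (P ^ (Nx x).card)⁻¹ := Finset.sum_le_sum (fun x _ => step2 x)
    have hwX : ∀ x ∈ X, w x ∈ 𝒮 := by
      intro x hx
      rw [hXdef, Finset.mem_filter] at hx
      obtain ⟨-, hx0, hxw⟩ := hx
      rw [hSSdef, Finset.mem_filter]
      refine ⟨Finset.mem_powerset.mpr (Finset.subset_univ _), ?_, ?_⟩
      · obtain ⟨j, hj⟩ := Function.ne_iff.mp hx0
        refine ⟨j, ?_⟩
        simp only [hwdef, Finset.mem_filter, Finset.mem_univ, true_and]
        simpa using hj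
      · have heq : {j | x j ≠ 0} = ((w x : Finset (Fin n)) : Set (Fin n)) := by
          ext j; simp [hwdef]
        rw [heq, Set.ncard_coe_finset] at hxw
        exact hxw
    have hNxw : ∀ x, Nx x = NF (w x) := by
      intro x
      simp only [hNxdef, hNFdef, hwdef]
      apply Finset.filter_congr
      intro i _
      simp only [Finset.mem_filter, Finset.mem_univ, true_and, eq_iff_iff]
      constructor
      · rintro ⟨j, h1, h2⟩; exact ⟨j, h2, h1⟩
      · rintro ⟨j, h2, h1⟩; exact ⟨j, h1, h2⟩
    have step4 : ∑ x ∈ X, (P ^ (Nx x).card)⁻¹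
        ≤ ∑ S ∈ 𝒮, P ^ S.card * (P ^ (NF S).card)⁻¹ := by
      rw [← Finset.sum_fiberwise_of_maps_to hwX (fun x => (P ^ (Nx x).card)⁻¹)]
      apply Finset.sum_le_sum
      intro S hS
      have hcongr : ∀ x ∈ X.filter (fun x => w x = S),
          (P ^ (Nx x).card)⁻¹ = (P ^ (NF S).card)⁻¹ := by
        intro x hx
        rw [hNxw x, (Finset.mem_filter.mp hx).2]
      rw [Finset.sum_congr rfl hcongr, Finset.sum_const, nsmul_eq_mul]
      apply mul_le_mul_of_nonneg_right _ (by positivity)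
      have hfc : (X.filter (fun x => w x = S)).card ≤ (p n) ^ S.card := by
        apply fiber_card_le n (p n) (hp n) _ S
        intro x hx
        exact (Finset.mem_filter.mp hx).2
      calc ((X.filter (fun x => w x = S)).card : ℝ) ≤ (((p n) ^ S.card : ℕ) : ℝ) := by
            exact_mod_cast hfc
        _ = P ^ S.card := by push_cast [hPdef]; ring
    have hexp' : ∀ S : Finset (Fin n), (S.card:ℝ) ≤ (n:ℝ)/(D+1) →
        c * (S.card:ℝ) ≤ ((NF S).card : ℝ) := by
      intro S hS
      have h := hexp n hm (↑S) (by rwa [Set.ncard_coe_finset])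
      rw [Set.ncard_coe_finset] at h
      have heq : {i : Fin (m n) | ∃ j ∈ (↑S : Set (Fin n)), H n i j = true}
          = ((NF S : Finset (Fin (m n))) : Set (Fin (m n))) := by
        ext i; simp [hNFdef]
      rw [heq, Set.ncard_coe_finset] at h
      exact h
    set q : ℝ := P ^ (-β) with hqdef
    have hq0 : (0:ℝ) ≤ q := Real.rpow_nonneg hP0.le _
    have termA : ∀ S ∈ 𝒮, (S.card:ℝ) ≤ (n:ℝ)/(D+1) →
        P ^ S.card * (P ^ (NF S).card)⁻¹ ≤ q ^ S.card := by
      intro S _ hcond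
      have hNFC : (1+β) * (S.card:ℝ) ≤ ((NF S).card:ℝ) := by
        rw [← hc1β]; exact hexp' S hcond
      have h1 : P ^ ((1+β) * ((S.card:ℕ):ℝ)) ≤ P ^ (((NF S).card:ℝ)) :=
        Real.rpow_le_rpow_of_exponent_le hP1.le hNFC
      calc P ^ S.card * (P ^ (NF S).card)⁻¹
          ≤ P ^ ((S.card:ℕ):ℝ) * (P ^ ((1+β) * ((S.card:ℕ):ℝ)))⁻¹ := by
            rw [Real.rpow_natCast]
            apply mul_le_mul_of_nonneg_left _ (by positivity)
            apply inv_anti₀ (Real.rpow_pos_of_pos hP0 _)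
            rw [← Real.rpow_natCast P (NF S).card]
            exact h1
        _ = P ^ (-(β * ((S.card:ℕ):ℝ))) := by
            rw [← Real.rpow_neg hP0.le, ← Real.rpow_add hP0]; congr 1; ring
        _ = q ^ S.card := by
            rw [← Real.rpow_natCast q S.card, hqdef, ← Real.rpow_mul hP0.le]
            congr 1; ring
    have termB : ∀ S ∈ 𝒮, ¬((S.card:ℝ) ≤ (n:ℝ)/(D+1)) →
        P ^ S.card * (P ^ (NF S).card)⁻¹ ≤ P ^ (c - γ * (n:ℝ)) := by
      intro S hS hcond
      push_neg at hcond
      obtain ⟨-, -, hSw⟩ := Finset.mem_filter.mp hS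
      set t := ⌊(n:ℝ)/(D+1)⌋₊ with htdef
      have htle : (t:ℝ) ≤ (n:ℝ)/(D+1) := Nat.floor_le (div_nonneg (by positivity) (by linarith))
      have htlt : t ≤ S.card := by
        have hlt : (t:ℝ) < (S.card:ℝ) := lt_of_le_of_lt htle hcond
        exact_mod_cast hlt.le
      obtain ⟨S', hS'sub, hS'card⟩ := Finset.exists_subset_card_eq htlt
      have hmono : NF S' ⊆ NF S := by
        intro i hi
        simp only [hNFdef, Finset.mem_filter, Finset.mem_univ, true_and] at hi ⊢
        obtain ⟨j, hj1, hj2⟩ := hi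
        exact ⟨j, hS'sub hj1, hj2⟩
      have hNFS : c * ((n:ℝ)/(D+1) - 1) ≤ ((NF S).card : ℝ) := by
        have h1 := hexp' S' (by rw [hS'card]; exact htle)
        have h2 : ((NF S').card:ℝ) ≤ ((NF S).card:ℝ) := by
          exact_mod_cast Finset.card_le_card hmono
        have h3 : (n:ℝ)/(D+1) - 1 ≤ (t:ℝ) := (Nat.sub_one_lt_floor _).le
        rw [hS'card] at h1
        nlinarith [mul_le_mul_of_nonneg_left h3 hc0.le]
      have hup : ((S.card:ℕ):ℝ) ≤ δ * n := hSw
      have u1 : P ^ S.card ≤ P ^ (δ*(n:ℝ)) := by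
        rw [← Real.rpow_natCast P S.card]
        exact Real.rpow_le_rpow_of_exponent_le hP1.le hup
      have u2 : (P ^ (NF S).card)⁻¹ ≤ (P ^ (c*((n:ℝ)/(D+1)-1)))⁻¹ := by
        apply inv_anti₀ (Real.rpow_pos_of_pos hP0 _)
        rw [← Real.rpow_natCast P (NF S).card]
        exact Real.rpow_le_rpow_of_exponent_le hP1.le hNFS
      calc P ^ S.card * (P ^ (NF S).card)⁻¹
          ≤ P ^ (δ*(n:ℝ)) * (P ^ (c*((n:ℝ)/(D+1)-1)))⁻¹ :=
            mul_le_mul u1 u2 (by positivity) (by positivity)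
        _ = P ^ (c - γ * (n:ℝ)) := by
            rw [← Real.rpow_neg hP0.le, ← Real.rpow_add hP0]
            congr 1
            rw [hγdef]
            field_simp
            ring
    have hTA : ∑ S ∈ 𝒮.filter (fun S => (S.card:ℝ) ≤ (n:ℝ)/(D+1)),
        P ^ S.card * (P ^ (NF S).card)⁻¹ ≤ 2 * ((n:ℝ) * q) := by
      set 𝒩 : Finset (Finset (Fin n)) :=
        Finset.univ.powerset.filter (fun S => S.Nonempty) with hNNdef
      have hsub : 𝒮.filter (fun S => (S.card:ℝ) ≤ (n:ℝ)/(D+1)) ⊆ 𝒩 := by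
        intro S hS
        obtain ⟨hS1, -⟩ := Finset.mem_filter.mp hS
        obtain ⟨h1, h2, -⟩ := Finset.mem_filter.mp hS1
        exact Finset.mem_filter.mpr ⟨h1, h2⟩
      have hmaps : ∀ S ∈ 𝒩, S.card ∈ Finset.Icc 1 n := by
        intro S hS
        obtain ⟨-, h2⟩ := Finset.mem_filter.mp hS
        rw [Finset.mem_Icc]
        constructor
        · exact Finset.card_pos.mpr h2
        · calc S.card ≤ (Finset.univ : Finset (Fin n)).card := Finset.card_le_univ S
            _ = n := by simp
      calc ∑ S ∈ 𝒮.filter (fun S => (S.card:ℝ) ≤ (n:ℝ)/(D+1)),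
            P ^ S.card * (P ^ (NF S).card)⁻¹
          ≤ ∑ S ∈ 𝒮.filter (fun S => (S.card:ℝ) ≤ (n:ℝ)/(D+1)), q ^ S.card := by
            apply Finset.sum_le_sum
            intro S hS
            obtain ⟨hS1, hS2⟩ := Finset.mem_filter.mp hS
            exact termA S hS1 hS2
        _ ≤ ∑ S ∈ 𝒩, q ^ S.card := by
            apply Finset.sum_le_sum_of_subset_of_nonneg hsub
            intro S _ _
            positivity
        _ = ∑ s ∈ Finset.Icc 1 n, ∑ S ∈ 𝒩.filter (fun S => S.card = s), q ^ S.card :=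
            (Finset.sum_fiberwise_of_maps_to hmaps _).symm
        _ ≤ ∑ s ∈ Finset.Icc 1 n, ((n:ℝ) * q) ^ s := by
            apply Finset.sum_le_sum
            intro s _
            have hinner : ∀ S ∈ 𝒩.filter (fun S => S.card = s), q ^ S.card = q ^ s := by
              intro S hS
              rw [(Finset.mem_filter.mp hS).2]
            rw [Finset.sum_congr rfl hinner, Finset.sum_const, nsmul_eq_mul]
            have hfc : (𝒩.filter (fun S => S.card = s)).card ≤ n ^ s := by
              calc (𝒩.filter (fun S => S.card = s)).card
                  ≤ (Finset.powersetCard s (Finset.univ : Finset (Fin n))).card := by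
                    apply Finset.card_le_card
                    intro S hS
                    exact Finset.mem_powersetCard_univ.mpr (Finset.mem_filter.mp hS).2
                _ = Nat.choose n s := by rw [Finset.card_powersetCard]; simp
                _ ≤ n ^ s := Nat.choose_le_pow n s
            calc ((𝒩.filter (fun S => S.card = s)).card : ℝ) * q ^ s
                ≤ ((n:ℝ)) ^ s * q ^ s := by
                  apply mul_le_mul_of_nonneg_right _ (by positivity)
                  exact_mod_cast hfc
              _ = ((n:ℝ) * q) ^ s := (mul_pow _ _ _).symm
        _ ≤ 2 * ((n:ℝ) * q) := geom_icc_le n _ (by positivity) he1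
    have hTB : ∑ S ∈ 𝒮.filter (fun S => ¬((S.card:ℝ) ≤ (n:ℝ)/(D+1))),
        P ^ S.card * (P ^ (NF S).card)⁻¹ ≤ P⁻¹ := by
      have hcard2 : ((𝒮.filter (fun S => ¬((S.card:ℝ) ≤ (n:ℝ)/(D+1)))).card : ℝ)
          ≤ (2:ℝ) ^ n := by
        calc ((𝒮.filter (fun S => ¬((S.card:ℝ) ≤ (n:ℝ)/(D+1)))).card : ℝ)
            ≤ ((Finset.univ.powerset : Finset (Finset (Fin n))).card : ℝ) := by
              have : (𝒮.filter (fun S => ¬((S.card:ℝ) ≤ (n:ℝ)/(D+1)))).card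
                  ≤ (Finset.univ.powerset : Finset (Finset (Fin n))).card := by
                apply Finset.card_le_card
                intro S hS
                exact (Finset.mem_filter.mp (Finset.mem_filter.mp hS).1).1
              exact_mod_cast this
          _ = (2:ℝ) ^ n := by
              rw [Finset.card_powerset]
              push_cast
              simp
      calc ∑ S ∈ 𝒮.filter (fun S => ¬((S.card:ℝ) ≤ (n:ℝ)/(D+1))),
            P ^ S.card * (P ^ (NF S).card)⁻¹
          ≤ (𝒮.filter (fun S => ¬((S.card:ℝ) ≤ (n:ℝ)/(D+1)))).card • P ^ (c - γ * (n:ℝ)) := by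
            apply Finset.sum_le_card_nsmul
            intro S hS
            obtain ⟨hS1, hS2⟩ := Finset.mem_filter.mp hS
            exact termB S hS1 hS2
        _ = ((𝒮.filter (fun S => ¬((S.card:ℝ) ≤ (n:ℝ)/(D+1)))).card : ℝ)
              * P ^ (c - γ * (n:ℝ)) := nsmul_eq_mul _ _
        _ ≤ (2:ℝ) ^ n * P ^ (c - γ * (n:ℝ)) := by
            apply mul_le_mul_of_nonneg_right hcard2 (by positivity)
        _ = P ^ c * ((2:ℝ) * P ^ (-γ)) ^ n := by
            rw [show c - γ * (n:ℝ) = c + (-γ) * (n:ℝ) by ring, Real.rpow_add hP0,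
              mul_pow, ← Real.rpow_natCast (P ^ (-γ)) n, ← Real.rpow_mul hP0.le]
            ring
        _ ≤ P ^ c * (P ^ (-(γ/2))) ^ n := by
            apply mul_le_mul_of_nonneg_left _ (by positivity)
            exact pow_le_pow_left₀ (by positivity) he2 n
        _ = P ^ (c + (-(γ/2)) * (n:ℝ)) := by
            rw [Real.rpow_add hP0, ← Real.rpow_natCast (P ^ (-(γ/2))) n,
              ← Real.rpow_mul hP0.le]
        _ ≤ P ^ (-1 : ℝ) := by
            apply Real.rpow_le_rpow_of_exponent_le hP1.le
            linarith
        _ = P⁻¹ := Real.rpow_neg_one P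
    calc ((Bad.ncard : ℝ)) / P ^ E.card
        ≤ ∑ x ∈ X, (P ^ (Nx x).card)⁻¹ := chain1
      _ ≤ ∑ S ∈ 𝒮, P ^ S.card * (P ^ (NF S).card)⁻¹ := step4
      _ = ∑ S ∈ 𝒮.filter (fun S => (S.card:ℝ) ≤ (n:ℝ)/(D+1)),
            P ^ S.card * (P ^ (NF S).card)⁻¹
          + ∑ S ∈ 𝒮.filter (fun S => ¬((S.card:ℝ) ≤ (n:ℝ)/(D+1))),
            P ^ S.card * (P ^ (NF S).card)⁻¹ :=
          (Finset.sum_filter_add_sum_filter_not 𝒮 _ _).symm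
      _ ≤ 2 * ((n:ℝ) * q) + P⁻¹ := add_le_add hTA hTB
  · exact hg0.mono_left inf_le_left
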